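/- For every integer k, one has the operator identities X⁺(k) = (r^{−1} s a)^k (K′)^{−k} E and X⁻(k) = (r^{−1} s a)^k F K^{k} on V = ℂ^{n+1}. (This verifies, on the evaluation representation V_n(a), the formulas ev_a(x⁺(k)) = r^{−k} s^k a^k ω′^{−k} e and ev_a(x⁻(k)) = r^{−k} s^k a^k f ω^{k} for the lift of the evaluation morphism to the Drinfeld realization of U_{r,s}(ŝl₂).) -/
import Mathlib


/-- The two-parameter quantum integer `[m] = (r^m - s^m)/(r - s)`. -/
noncomputable def qint (r s : ℂ) (m : ℕ) : ℂ := (r ^ m - s ^ m) / (r - s)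

/-- The operator `E` on `V = ℂ^{n+1}`, `E v_i = [n+1-i] v_{i-1}` (with `v_{-1} = 0`). -/
noncomputable def Emat (n : ℕ) (r s : ℂ) : Matrix (Fin (n + 1)) (Fin (n + 1)) ℂ :=
  Matrix.of fun j i => if (j : ℕ) + 1 = (i : ℕ) then qint r s (n + 1 - (i : ℕ)) else 0

/-- The operator `F` on `V = ℂ^{n+1}`, `F v_i = [i+1] v_{i+1}` (with `v_{n+1} = 0`). -/
noncomputable def Fmat (n : ℕ) (r s : ℂ) : Matrix (Fin (n + 1)) (Fin (n + 1)) ℂ :=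
  Matrix.of fun j i => if (j : ℕ) = (i : ℕ) + 1 then qint r s ((i : ℕ) + 1) else 0

/-- The operator `K` on `V = ℂ^{n+1}`, `K v_i = r^{n-i} s^i v_i`. -/
noncomputable def Kmat (n : ℕ) (r s : ℂ) : Matrix (Fin (n + 1)) (Fin (n + 1)) ℂ :=
  Matrix.diagonal fun i => r ^ (n - (i : ℕ)) * s ^ (i : ℕ)

/-- The operator `K′` on `V = ℂ^{n+1}`, `K′ v_i = r^i s^{n-i} v_i`. -/
noncomputable def K'mat (n : ℕ) (r s : ℂ) : Matrix (Fin (n + 1)) (Fin (n + 1)) ℂ :=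
  Matrix.diagonal fun i => r ^ (i : ℕ) * s ^ (n - (i : ℕ))

/-- The loop operator `X⁺(k)` on `V = ℂ^{n+1}`,
`X⁺(k) v_i = a^k s^{−nk} (r s⁻¹)^{−ki} [n+1−i] v_{i−1}` (with `v_{-1} = 0`). -/
noncomputable def Xp (n : ℕ) (r s a : ℂ) (k : ℤ) : Matrix (Fin (n + 1)) (Fin (n + 1)) ℂ :=
  Matrix.of fun j i =>
    if (j : ℕ) + 1 = (i : ℕ) then
      a ^ k * s ^ (-(n : ℤ) * k) * (r * s⁻¹) ^ (-(k * (i : ℤ))) * qint r s (n + 1 - (i : ℕ))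
    else 0

/-- The loop operator `X⁻(k)` on `V = ℂ^{n+1}`,
`X⁻(k) v_i = a^k r^{nk} (r s⁻¹)^{−k(i+1)} [i+1] v_{i+1}` (with `v_{n+1} = 0`). -/
noncomputable def Xm (n : ℕ) (r s a : ℂ) (k : ℤ) : Matrix (Fin (n + 1)) (Fin (n + 1)) ℂ :=
  Matrix.of fun j i =>
    if (j : ℕ) = (i : ℕ) + 1 then
      a ^ k * r ^ ((n : ℤ) * k) * (r * s⁻¹) ^ (-(k * ((i : ℤ) + 1))) * qint r s ((i : ℕ) + 1)
    else 0


lemma diag_inv' {m : Type*} [Fintype m] [DecidableEq m] (d : m → ℂ) (hd : ∀ i, d i ≠ 0) :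
    (Matrix.diagonal d)⁻¹ = Matrix.diagonal (fun i => (d i)⁻¹) := by
  apply Matrix.inv_eq_right_inv
  rw [Matrix.diagonal_mul_diagonal]
  convert Matrix.diagonal_one
  exact mul_inv_cancel₀ (hd _)

lemma diag_zpow' {m : Type*} [Fintype m] [DecidableEq m] (d : m → ℂ) (hd : ∀ i, d i ≠ 0)
    (k : ℤ) : (Matrix.diagonal d) ^ k = Matrix.diagonal (fun i => d i ^ k) := by
  cases k with
  | ofNat m => simp [Matrix.diagonal_pow]
  | negSucc m =>
      rw [zpow_negSucc, Matrix.diagonal_pow,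
        diag_inv' (d ^ (m + 1)) (fun i => pow_ne_zero _ (hd i))]
      rfl

lemma units_key1 (r s a : ℂˣ) (k n j : ℤ) :
    a ^ k * s ^ (-n * k) * (r * s⁻¹) ^ (-(k * (j + 1))) =
      (r⁻¹ * s * a) ^ k * (r ^ j * s ^ (n - j)) ^ (-k) := by
  apply Additive.ofMul.injective
  simp only [ofMul_mul, ofMul_zpow, ofMul_inv, smul_add, smul_neg, smul_smul, neg_smul]
  module

lemma units_key2 (r s a : ℂˣ) (k n j : ℤ) :
    a ^ k * r ^ (n * k) * (r * s⁻¹) ^ (-(k * (j + 1))) =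
      (r⁻¹ * s * a) ^ k * (r ^ (n - j) * s ^ j) ^ k := by
  apply Additive.ofMul.injective
  simp only [ofMul_mul, ofMul_zpow, ofMul_inv, smul_add, smul_neg, smul_smul, neg_smul]
  module

lemma scalar_key1 (r s a : ℂ) (hr : r ≠ 0) (hs : s ≠ 0) (ha : a ≠ 0) (k n j : ℤ) :
    a ^ k * s ^ (-n * k) * (r * s⁻¹) ^ (-(k * (j + 1))) =
      (r⁻¹ * s * a) ^ k * (r ^ j * s ^ (n - j)) ^ (-k) := by
  lift r to ℂˣ using isUnit_iff_ne_zero.2 hr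
  lift s to ℂˣ using isUnit_iff_ne_zero.2 hs
  lift a to ℂˣ using isUnit_iff_ne_zero.2 ha
  exact_mod_cast congrArg Units.val (units_key1 r s a k n j)

lemma scalar_key2 (r s a : ℂ) (hr : r ≠ 0) (hs : s ≠ 0) (ha : a ≠ 0) (k n j : ℤ) :
    a ^ k * r ^ (n * k) * (r * s⁻¹) ^ (-(k * (j + 1))) =
      (r⁻¹ * s * a) ^ k * (r ^ (n - j) * s ^ j) ^ k := by
  lift r to ℂˣ using isUnit_iff_ne_zero.2 hr
  lift s to ℂˣ using isUnit_iff_ne_zero.2 hs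
  lift a to ℂˣ using isUnit_iff_ne_zero.2 ha
  exact_mod_cast congrArg Units.val (units_key2 r s a k n j)

/-- On the evaluation representation `V_n(a)`: for every integer `k`,
`X⁺(k) = (r⁻¹ s a)^k (K′)^{−k} E` and `X⁻(k) = (r⁻¹ s a)^k F K^k`, verifying the formulas
`ev_a(x⁺(k)) = r^{−k} s^k a^k ω′^{−k} e` and `ev_a(x⁻(k)) = r^{−k} s^k a^k f ω^k`. -/
theorem evaluation_morphism_formulas (n : ℕ) (r s a : ℂ) (hr : r ≠ 0) (hs : s ≠ 0)
    (ha : a ≠ 0) (hrs : r ≠ s) (k : ℤ) :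
    Xp n r s a k = (r⁻¹ * s * a) ^ k • (K'mat n r s ^ (-k) * Emat n r s) ∧
    Xm n r s a k = (r⁻¹ * s * a) ^ k • (Fmat n r s * Kmat n r s ^ k) := by
  have hK' : ∀ i : Fin (n+1), (r ^ (i:ℕ) * s ^ (n - (i:ℕ)) : ℂ) ≠ 0 :=
    fun i => mul_ne_zero (pow_ne_zero _ hr) (pow_ne_zero _ hs)
  have hK : ∀ i : Fin (n+1), (r ^ (n - (i:ℕ)) * s ^ (i:ℕ) : ℂ) ≠ 0 :=
    fun i => mul_ne_zero (pow_ne_zero _ hr) (pow_ne_zero _ hs)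
  constructor
  · rw [K'mat, diag_zpow' _ hK']
    ext p q
    simp only [Xp, Emat, Matrix.smul_apply, Matrix.of_apply, smul_eq_mul,
      Matrix.diagonal_mul]
    by_cases h : (p : ℕ) + 1 = (q : ℕ)
    · simp only [h, if_true]
      have hpn : (p : ℕ) ≤ n := by omega
      have hqn : (q : ℕ) ≤ n := by omega
      have hcast : (r ^ (p:ℕ) * s ^ (n - (p:ℕ)) : ℂ)
          = r ^ ((p:ℕ):ℤ) * s ^ ((n:ℤ) - ((p:ℕ):ℤ)) := by
        rw [← Nat.cast_sub hpn]
        simp [zpow_natCast]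
      have hq : ((q:ℕ):ℤ) = ((p:ℕ):ℤ) + 1 := by exact_mod_cast congrArg Nat.cast h.symm
      rw [← mul_assoc, hcast, hq]
      exact congrArg (· * qint r s (n + 1 - (q:ℕ)))
        (scalar_key1 r s a hr hs ha k n (p:ℕ))
    · simp [h]
  · rw [Kmat, diag_zpow' _ hK]
    ext p q
    simp only [Xm, Fmat, Matrix.smul_apply, Matrix.of_apply, smul_eq_mul,
      Matrix.mul_diagonal]
    by_cases h : (p : ℕ) = (q : ℕ) + 1
    · simp only [h, if_true]
      have hqn : (q : ℕ) ≤ n := by omega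
      have hcast : (r ^ (n - (q:ℕ)) * s ^ (q:ℕ) : ℂ)
          = r ^ ((n:ℤ) - ((q:ℕ):ℤ)) * s ^ ((q:ℕ):ℤ) := by
        rw [← Nat.cast_sub hqn]
        simp [zpow_natCast]
      rw [mul_comm (qint r s ((q:ℕ) + 1)) _, ← mul_assoc, hcast]
      exact congrArg (· * qint r s ((q:ℕ) + 1)) (scalar_key2 r s a hr hs ha k n (q:ℕ))
    · simp [h]
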